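/- arXiv:2512.24199 — 3 statements merged into one kernel-verified Lean document; each statement's English description precedes it below -/
import Mathlib

section
/- Under the setup of the homogeneous random walk on H(d,n), each eigenvalue λ_i (i ∈ {1,...,d}) satisfies −1/(n−1) ≤ λ_i ≤ 1, because λ_i = E[(−1/(n−1))^L] for a random variable L supported on {0,...,i} distributed as a mixture of hypergeometric distributions: P(L=l) = Σ_{j=l}^{d+l−i} [C(i,l)C(d−i,j−l)/C(d,j)] w_j. -/
open Finset

/-- The Krawtchouk polynomial `K_j(i)` for the Hamming graph `H(d,n)`. -/
noncomputable def krawtchouk (n d i j : ℕ) : ℝ :=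
  ∑ l ∈ Finset.Icc (max 0 (i + j - d)) (min i j),
    (-1 : ℝ) ^ l * ((n : ℝ) - 1) ^ (i - l) * (Nat.choose j l) * (Nat.choose (d - j) (i - l))

/-- `κ_j = C(d,j)(n-1)^j`. -/
def kappa (n d j : ℕ) : ℕ := Nat.choose d j * (n - 1) ^ j

/-- Vandermonde's identity restricted to the support interval. -/
lemma vandermonde_icc (d i j : ℕ) (hid : i ≤ d) (hj : j ≤ d) :
    ∑ l ∈ Finset.Icc (max 0 (j + i - d)) (min j i),
      Nat.choose i l * Nat.choose (d - i) (j - l) = Nat.choose d j := by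
  have hsub : Finset.Icc (max 0 (j + i - d)) (min j i) ⊆ Finset.range (j + 1) := by
    intro l hl
    simp only [Finset.mem_Icc] at hl
    simp only [Finset.mem_range]
    omega
  rw [Finset.sum_subset hsub]
  · have := Nat.add_choose_eq i (d - i) j
    rw [Nat.add_sub_cancel' hid] at this
    rw [this, Finset.Nat.sum_antidiagonal_eq_sum_range_succ_mk]
  · intro l hl hl'
    simp only [Finset.mem_range] at hl
    simp only [Finset.mem_Icc, not_and_or, not_le] at hl'
    rcases hl' with h | h
    · have : d - i < j - l := by omega
      rw [Nat.choose_eq_zero_of_lt this, mul_zero]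
    · have : i < l := by omega
      rw [Nat.choose_eq_zero_of_lt this, zero_mul]

theorem eigenvalue_hypergeometric_mixture (n d i : ℕ) (hn : 2 ≤ n) (hd : 2 ≤ d)
    (hi1 : 1 ≤ i) (hid : i ≤ d)
    (w : ℕ → ℝ) (hw : ∀ j, 0 ≤ w j) (hw1 : ∑ j ∈ Finset.range (d + 1), w j = 1) :
    (∑ j ∈ Finset.range (d + 1), w j / (kappa n d j : ℝ) * krawtchouk n d j i
        = ∑ l ∈ Finset.range (i + 1),
            (∑ j ∈ Finset.Icc l (d + l - i),
              (Nat.choose i l : ℝ) * (Nat.choose (d - i) (j - l)) / (Nat.choose d j) * w j) *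
            (-1 / ((n : ℝ) - 1)) ^ l)
    ∧ (-1 / ((n : ℝ) - 1)
        ≤ ∑ j ∈ Finset.range (d + 1), w j / (kappa n d j : ℝ) * krawtchouk n d j i)
    ∧ (∑ j ∈ Finset.range (d + 1), w j / (kappa n d j : ℝ) * krawtchouk n d j i ≤ 1) := by
  have hB1 : (1 : ℝ) ≤ (n : ℝ) - 1 := by
    have : (2 : ℝ) ≤ (n : ℝ) := by exact_mod_cast hn
    linarith
  have hB : (0 : ℝ) < (n : ℝ) - 1 := by linarith
  set a : ℝ := -1 / ((n : ℝ) - 1) with ha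
  set g : ℕ → ℕ → ℝ := fun j l =>
    (Nat.choose i l : ℝ) * (Nat.choose (d - i) (j - l)) / (Nat.choose d j) * w j with hg
  -- the generic interchange of summation
  have hswap : ∀ F : ℕ → ℕ → ℝ,
      (∑ j ∈ Finset.range (d + 1), ∑ l ∈ Finset.Icc (max 0 (j + i - d)) (min j i), F j l)
      = ∑ l ∈ Finset.range (i + 1), ∑ j ∈ Finset.Icc l (d + l - i), F j l := by
    intro F
    refine Finset.sum_comm' ?_
    intro j l
    simp only [Finset.mem_range, Finset.mem_Icc]
    omega
  -- per-j expression
  have hperj : ∀ j ∈ Finset.range (d + 1),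
      w j / (kappa n d j : ℝ) * krawtchouk n d j i
        = ∑ l ∈ Finset.Icc (max 0 (j + i - d)) (min j i), g j l * a ^ l := by
    intro j hj
    simp only [Finset.mem_range] at hj
    have hj' : j ≤ d := by omega
    have hC : (0 : ℝ) < (Nat.choose d j : ℝ) := by exact_mod_cast Nat.choose_pos hj'
    have hk : (kappa n d j : ℝ) = (Nat.choose d j : ℝ) * ((n : ℝ) - 1) ^ j := by
      rw [kappa]
      push_cast [Nat.cast_sub (show 1 ≤ n by omega)]
      ring
    rw [krawtchouk, Finset.mul_sum]
    refine Finset.sum_congr rfl ?_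
    intro l hl
    simp only [Finset.mem_Icc] at hl
    have hlj : l ≤ j := le_trans hl.2 (min_le_left _ _)
    rw [hk, hg, ha, div_pow]
    rw [show ((n : ℝ) - 1) ^ j = ((n : ℝ) - 1) ^ (j - l) * ((n : ℝ) - 1) ^ l from by
      rw [← pow_add]; congr 1; omega]
    have h1 : ((n : ℝ) - 1) ^ (j - l) ≠ 0 := by positivity
    have h2 : ((n : ℝ) - 1) ^ l ≠ 0 := by positivity
    field_simp
  -- the main equality
  have hEq : ∑ j ∈ Finset.range (d + 1), w j / (kappa n d j : ℝ) * krawtchouk n d j i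
      = ∑ l ∈ Finset.range (i + 1),
          (∑ j ∈ Finset.Icc l (d + l - i), g j l) * a ^ l := by
    rw [Finset.sum_congr rfl hperj, hswap fun j l => g j l * a ^ l]
    refine Finset.sum_congr rfl ?_
    intro l _
    rw [Finset.sum_mul]
  -- the weights sum to one
  have hP1 : ∑ l ∈ Finset.range (i + 1), (∑ j ∈ Finset.Icc l (d + l - i), g j l) = 1 := by
    rw [← hswap g, ← hw1]
    refine Finset.sum_congr rfl ?_
    intro j hj
    simp only [Finset.mem_range] at hj
    have hj' : j ≤ d := by omega
    have hC : (0 : ℝ) < (Nat.choose d j : ℝ) := by exact_mod_cast Nat.choose_pos hj'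
    have hvan : ∑ l ∈ Finset.Icc (max 0 (j + i - d)) (min j i),
        (Nat.choose i l : ℝ) * (Nat.choose (d - i) (j - l)) = (Nat.choose d j : ℝ) := by
      exact_mod_cast congrArg (Nat.cast : ℕ → ℝ) (vandermonde_icc d i j hid hj')
    calc ∑ l ∈ Finset.Icc (max 0 (j + i - d)) (min j i), g j l
        = (∑ l ∈ Finset.Icc (max 0 (j + i - d)) (min j i),
            (Nat.choose i l : ℝ) * (Nat.choose (d - i) (j - l))) / (Nat.choose d j) * w j := by
          rw [Finset.sum_div, Finset.sum_mul]
      _ = w j := by rw [hvan, div_self (ne_of_gt hC), one_mul]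
  -- nonnegativity of the weights
  have hPnn : ∀ l, 0 ≤ ∑ j ∈ Finset.Icc l (d + l - i), g j l := by
    intro l
    refine Finset.sum_nonneg ?_
    intro j _
    exact mul_nonneg (div_nonneg (by positivity) (by positivity)) (hw j)
  -- bounds on a^l
  have hneg : a < 0 := by
    rw [ha]
    exact div_neg_of_neg_of_pos (by norm_num) hB
  have habs : |a| = 1 / ((n : ℝ) - 1) := by
    rw [ha, abs_div, abs_neg, abs_one, abs_of_pos hB]
  have habs1 : |a| ≤ 1 := by
    rw [habs]
    rw [div_le_one hB]; linarith
  have hle1 : ∀ l : ℕ, a ^ l ≤ 1 := by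
    intro l
    calc a ^ l ≤ |a ^ l| := le_abs_self _
      _ = |a| ^ l := abs_pow a l
      _ ≤ 1 := pow_le_one₀ (abs_nonneg a) habs1
  have hgea : ∀ l : ℕ, a ≤ a ^ l := by
    intro l
    rcases Nat.eq_zero_or_pos l with h0 | h1
    · subst h0; simpa using le_of_lt (lt_of_lt_of_le hneg (by norm_num))
    · have h2 : |a| ^ l ≤ |a| := pow_le_of_le_one (abs_nonneg a) habs1 (by omega)
      calc a = -|a| := by rw [abs_of_neg hneg]; ring
        _ ≤ -|a| ^ l := by linarith
        _ = -|a ^ l| := by rw [abs_pow]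
        _ ≤ a ^ l := neg_abs_le _
  refine ⟨hEq, ?_, ?_⟩
  · rw [hEq]
    calc a = (∑ l ∈ Finset.range (i + 1), (∑ j ∈ Finset.Icc l (d + l - i), g j l)) * a := by
          rw [hP1, one_mul]
      _ = ∑ l ∈ Finset.range (i + 1), (∑ j ∈ Finset.Icc l (d + l - i), g j l) * a := by
          rw [Finset.sum_mul]
      _ ≤ _ := by
          refine Finset.sum_le_sum ?_
          intro l _
          exact mul_le_mul_of_nonneg_left (hgea l) (hPnn l)
  · rw [hEq]
    calc ∑ l ∈ Finset.range (i + 1), (∑ j ∈ Finset.Icc l (d + l - i), g j l) * a ^ l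
        ≤ ∑ l ∈ Finset.range (i + 1), (∑ j ∈ Finset.Icc l (d + l - i), g j l) := by
          refine Finset.sum_le_sum ?_
          intro l _
          calc (∑ j ∈ Finset.Icc l (d + l - i), g j l) * a ^ l
              ≤ (∑ j ∈ Finset.Icc l (d + l - i), g j l) * 1 :=
                mul_le_mul_of_nonneg_left (hle1 l) (hPnn l)
            _ = _ := mul_one _
      _ = 1 := hP1
end

section
/- For m > 0 and no boundary, the mean field (1/n^d)Σ_{x∈X} g_x of the Gaussian free field on H(d,n) with Gibbs measure determined by P equals (1/√(n^d β)) Z_0/m in distribution; in particular it is a centred Gaussian with variance 1/(n^d β m²). Hence there is no spontaneous magnetisation. -/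
open Finset MeasureTheory ProbabilityTheory

/-- The primitive `n`-th root of unity `ζ = e^{2π√-1/n}`. -/
noncomputable def zeta (n : ℕ) : ℂ := Complex.exp (2 * Real.pi * Complex.I / n)

/-- The Hamming weight: number of nonzero coordinates. -/
def wt {n d : ℕ} (y : Fin d → Fin n) : ℕ :=
  (Finset.univ.filter fun j => (y j : ℕ) ≠ 0).card

lemma zeta_prim (n : ℕ) (hn : 0 < n) : IsPrimitiveRoot (zeta n) n := by
  have := Complex.isPrimitiveRoot_exp n hn.ne'
  simpa [zeta, mul_comm, mul_div_assoc, mul_assoc] using this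

/-- Geometric sum of `ζ^{k y}` over `k : Fin n`. -/
lemma fin_char_sum (n : ℕ) (hn : 2 ≤ n) (y : Fin n) :
    ∑ k : Fin n, zeta n ^ ((k : ℕ) * (y : ℕ)) = if (y : ℕ) = 0 then (n : ℂ) else 0 := by
  have hn0 : 0 < n := by omega
  have hprim := zeta_prim n hn0
  by_cases hy : (y : ℕ) = 0
  · simp [hy]
  · simp only [hy, if_false]
    have h1 : zeta n ^ (y : ℕ) ≠ 1 :=
      hprim.pow_ne_one_of_pos_of_lt hy y.isLt
    have : ∑ k : Fin n, zeta n ^ ((k : ℕ) * (y : ℕ))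
        = ∑ k ∈ Finset.range n, (zeta n ^ (y : ℕ)) ^ k := by
      rw [Fin.sum_univ_eq_sum_range (fun k => zeta n ^ (k * (y : ℕ)))]
      exact Finset.sum_congr rfl fun k _ => by rw [← pow_mul, mul_comm]
    rw [this, geom_sum_eq h1]
    have : (zeta n ^ (y : ℕ)) ^ n = 1 := by
      rw [← pow_mul, mul_comm, pow_mul, hprim.pow_eq_one, one_pow]
    rw [this]
    simp

lemma char_sum (n d : ℕ) (hn : 2 ≤ n) (y : Fin d → Fin n) :
    ∑ x : Fin d → Fin n, zeta n ^ (∑ j, (x j : ℕ) * (y j : ℕ))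
      = if (∀ j, (y j : ℕ) = 0) then ((n : ℂ) ^ d) else 0 := by
  have h1 : ∀ x : Fin d → Fin n, zeta n ^ (∑ j, (x j : ℕ) * (y j : ℕ))
      = ∏ j, zeta n ^ ((x j : ℕ) * (y j : ℕ)) := fun x =>
    (Finset.prod_pow_eq_pow_sum Finset.univ _ _).symm
  simp_rw [h1]
  have h2 : (∑ x : Fin d → Fin n, ∏ j, zeta n ^ ((x j : ℕ) * (y j : ℕ)))
      = ∏ j, ∑ k : Fin n, zeta n ^ ((k : ℕ) * (y j : ℕ)) := by
    rw [Finset.prod_univ_sum]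
    rw [← Fintype.piFinset_univ]
  rw [h2]
  by_cases hy : ∀ j, (y j : ℕ) = 0
  · have : ∀ j : Fin d, (∑ k : Fin n, zeta n ^ ((k : ℕ) * (y j : ℕ))) = (n : ℂ) := by
      intro j; rw [fin_char_sum n hn, if_pos (hy j)]
    rw [if_pos hy, Finset.prod_congr rfl fun j _ => this j, Finset.prod_const,
      Finset.card_univ, Fintype.card_fin]
  · simp only [hy, if_false]
    push_neg at hy
    obtain ⟨j, hj⟩ := hy
    apply Finset.prod_eq_zero (Finset.mem_univ j)
    rw [fin_char_sum n hn, if_neg hj]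

theorem no_spontaneous_magnetisation (n d : ℕ) (hn : 2 ≤ n) (hd : 2 ≤ d)
    (β m α : ℝ) (hβ : 0 < β) (hm : 0 < m) (hα : α = 1 / (1 + m ^ 2))
    (lam : ℕ → ℝ) (hlam0 : lam 0 = 1)
    (Ω : Type*) [MeasureSpace Ω] (μ : Measure Ω) [IsProbabilityMeasure μ]
    (Z : (Fin d → Fin n) → Ω → ℝ) (hmeas : ∀ y, Measurable (Z y))
    (x₀ : Fin d → Fin n) (hx₀ : ∀ j, (x₀ j : ℕ) = 0)
    (hgauss : μ.map (Z x₀) = gaussianReal 0 1)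
    (g : (Fin d → Fin n) → Ω → ℂ)
    (hg : ∀ x ω, g x ω = (1 / Real.sqrt β) *
        ∑ y : Fin d → Fin n,
          (Z y ω : ℂ) / Real.sqrt (1 / α - lam (wt y)) *
            (zeta n ^ (∑ j, (x j : ℕ) * (y j : ℕ)) / Real.sqrt ((n : ℝ) ^ d))) :
    (∀ ω, (1 / (n : ℂ) ^ d) * ∑ x : Fin d → Fin n, g x ω
        = ((1 / (m * Real.sqrt ((n : ℝ) ^ d * β)) * Z x₀ ω : ℝ) : ℂ))
    ∧ μ.map (fun ω => 1 / (m * Real.sqrt ((n : ℝ) ^ d * β)) * Z x₀ ω)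
        = gaussianReal 0 (Real.toNNReal (1 / ((n : ℝ) ^ d * β * m ^ 2))) := by
  have hn0 : (0 : ℝ) < n := by positivity
  have hnd : (0 : ℝ) < (n : ℝ) ^ d := by positivity
  have hwt0 : wt x₀ = 0 := by
    simp only [wt, Finset.card_eq_zero, Finset.filter_eq_empty_iff]
    intro j _; simpa using hx₀ j
  have hαval : 1 / α - lam (wt x₀) = m ^ 2 := by
    rw [hwt0, hlam0, hα]
    have : (1 : ℝ) + m ^ 2 ≠ 0 := by positivity
    field_simp
    ring
  constructor
  · intro ω
    have hswap : ∑ x : Fin d → Fin n, g x ω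
        = (1 / Real.sqrt β : ℂ) * ∑ y : Fin d → Fin n,
            (Z y ω : ℂ) / Real.sqrt (1 / α - lam (wt y)) *
              ((∑ x : Fin d → Fin n, zeta n ^ (∑ j, (x j : ℕ) * (y j : ℕ)))
                / Real.sqrt ((n : ℝ) ^ d)) := by
      simp_rw [hg, ← Finset.mul_sum]
      congr 1
      rw [Finset.sum_comm]
      refine Finset.sum_congr rfl fun y _ => ?_
      rw [← Finset.mul_sum, Finset.sum_div]
    have hsingle : ∑ y : Fin d → Fin n,
            (Z y ω : ℂ) / Real.sqrt (1 / α - lam (wt y)) *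
              ((∑ x : Fin d → Fin n, zeta n ^ (∑ j, (x j : ℕ) * (y j : ℕ)))
                / Real.sqrt ((n : ℝ) ^ d))
        = (Z x₀ ω : ℂ) / Real.sqrt (m ^ 2) * (((n : ℂ) ^ d) / Real.sqrt ((n : ℝ) ^ d)) := by
      rw [Finset.sum_eq_single x₀]
      · rw [char_sum n d hn, if_pos hx₀, hαval]
      · intro y _ hy
        rw [char_sum n d hn, if_neg, zero_div, mul_zero]
        intro h
        exact hy (funext fun j => Fin.ext (by rw [h j, hx₀ j]))
      · intro h; exact absurd (Finset.mem_univ x₀) h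
    rw [hswap, hsingle]
    have hsm : Real.sqrt (m ^ 2) = m := by
      exact Real.sqrt_sq hm.le
    have hsnd : Real.sqrt ((n : ℝ) ^ d) ≠ 0 := by positivity
    have hsβ : Real.sqrt β ≠ 0 := by positivity
    have hsplit : Real.sqrt ((n : ℝ) ^ d * β) = Real.sqrt ((n : ℝ) ^ d) * Real.sqrt β :=
      Real.sqrt_mul (le_of_lt hnd) β
    have hndsq : ((Real.sqrt ((n : ℝ) ^ d) : ℝ) : ℂ) * ((Real.sqrt ((n : ℝ) ^ d) : ℝ) : ℂ)
        = ((n : ℂ) ^ d) := by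
      rw [← Complex.ofReal_mul, Real.mul_self_sqrt (le_of_lt hnd)]
      push_cast
      ring
    rw [hsm, hsplit]
    have hndC : ((n : ℂ) ^ d) ≠ 0 := by
      rw [← hndsq]
      simp only [ne_eq, mul_self_eq_zero, Complex.ofReal_eq_zero]
      exact hsnd
    push_cast
    rw [← hndsq]
    have hmC : (m : ℂ) ≠ 0 := by exact_mod_cast hm.ne'
    have hsndC : ((Real.sqrt ((n : ℝ) ^ d) : ℝ) : ℂ) ≠ 0 := by exact_mod_cast hsnd
    have hsβC : ((Real.sqrt β : ℝ) : ℂ) ≠ 0 := by exact_mod_cast hsβ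
    field_simp
  · have hc : μ.map (fun ω => 1 / (m * Real.sqrt ((n : ℝ) ^ d * β)) * Z x₀ ω)
        = (μ.map (Z x₀)).map (fun x => 1 / (m * Real.sqrt ((n : ℝ) ^ d * β)) * x) := by
      rw [Measure.map_map (measurable_id'.const_mul _) (hmeas x₀)]
      rfl
    rw [hc, hgauss]
    have := gaussianReal_map_const_mul (μ := 0) (v := 1)
      (1 / (m * Real.sqrt ((n : ℝ) ^ d * β)))
    rw [show (fun x : ℝ => 1 / (m * Real.sqrt ((n : ℝ) ^ d * β)) * x)
        = ((1 / (m * Real.sqrt ((n : ℝ) ^ d * β))) * ·) from rfl, this]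
    congr 1
    · ring
    · ext
      rw [NNReal.coe_mul, NNReal.coe_one, mul_one, Real.coe_toNNReal]
      · show (1 / (m * Real.sqrt ((n : ℝ) ^ d * β))) ^ 2 = _
        rw [div_pow, one_pow, mul_pow, Real.sq_sqrt (by positivity)]
        ring
      · positivity
end

section
/- For the simple random walk on H(d,n) (nearest-neighbour, eigenvalues λ_i = 1 − ni/((n−1)d)) killed at the boundary ∂_r, the probability p_1 that the walk starting at distance 1 from the origin hits ∂_r before returning to the origin satisfies p_1^{-1} = Σ_{i=0}^r C(d−1,i)^{-1} (n−1)^{-i}; hence the Green function at the origin equals G_{1,∂_r}(0,0) = Σ_{i=0}^r C(d−1,i)^{-1}(n−1)^{-i}. Equivalently, the solution of the recurrence p_{x+1} − p_x = [x/((d−x)(n−1))](p_x − p_{x−1}) for x = 1,...,r with p_0 = 0, p_{r+1} = 1 satisfies p_1 = (Σ_{i=0}^r C(d−1,i)^{-1}(n−1)^{-i})^{-1}. -/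
open Finset

theorem gambler_ruin_simple_walk (n d r : ℕ) (hn : 2 ≤ n) (hd : 2 ≤ d)
    (hr1 : 1 ≤ r) (hrd : r ≤ d - 1)
    (p : ℕ → ℝ) (hp0 : p 0 = 0) (hpr : p (r + 1) = 1)
    (hrec : ∀ x, 1 ≤ x → x ≤ r →
      p (x + 1) - p x = (x : ℝ) / (((d : ℝ) - x) * ((n : ℝ) - 1)) * (p x - p (x - 1))) :
    p 1 = (∑ i ∈ Finset.range (r + 1),
        ((Nat.choose (d - 1) i : ℝ) * ((n : ℝ) - 1) ^ i)⁻¹)⁻¹ := by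
  have hn1 : (1:ℝ) ≤ (n:ℝ) - 1 := by
    have : (2:ℝ) ≤ (n:ℝ) := by exact_mod_cast hn
    linarith
  have hn0 : (0:ℝ) < (n:ℝ) - 1 := by linarith
  -- increments formula
  have key : ∀ x, x ≤ r →
      p (x + 1) - p x = p 1 * ((Nat.choose (d - 1) x : ℝ) * ((n:ℝ) - 1) ^ x)⁻¹ := by
    intro x
    induction x with
    | zero => intro _; simp [hp0]
    | succ x ih =>
      intro hxr
      have hx : x ≤ r := Nat.le_of_succ_le hxr
      have hxd : x + 1 ≤ d - 1 := le_trans hxr hrd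
      have hxd' : x ≤ d - 2 := by omega
      have hrec' := hrec (x+1) (Nat.le_add_left 1 x) hxr
      simp only [Nat.add_sub_cancel] at hrec'
      rw [hrec', ih hx]
      have hcast : (d:ℝ) - ((x:ℝ)+1) = ((d - 1 - x : ℕ) : ℝ) := by
        have : (d - 1 - x : ℕ) = d - (x+1) := by omega
        rw [this]
        have h := Nat.cast_sub (by omega : x + 1 ≤ d) (R := ℝ)
        push_cast at h ⊢
        linarith
      have hchoose : ((Nat.choose (d-1) (x+1) : ℕ) : ℝ) * ((x:ℝ)+1)
          = ((Nat.choose (d-1) x : ℕ) : ℝ) * ((d - 1 - x : ℕ) : ℝ) := by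
        exact_mod_cast congrArg (Nat.cast (R := ℝ)) (Nat.choose_succ_right_eq (d-1) x)
      have hc1 : (0:ℝ) < (Nat.choose (d-1) x : ℝ) := by
        exact_mod_cast Nat.choose_pos (le_trans hx hrd)
      have hc2 : (0:ℝ) < (Nat.choose (d-1) (x+1) : ℝ) := by
        exact_mod_cast Nat.choose_pos hxd
      have hdx : (0:ℝ) < ((d - 1 - x : ℕ) : ℝ) := by
        exact_mod_cast Nat.sub_pos_of_lt (by omega : x < d - 1)
      push_cast at hcast ⊢
      rw [hcast]
      have hpow : (0:ℝ) < ((n:ℝ) - 1) ^ x := pow_pos hn0 x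
      have hfac : ((x:ℝ)+1)/(((d - 1 - x : ℕ):ℝ)*((n:ℝ)-1)) *
          (((Nat.choose (d-1) x : ℕ):ℝ)*((n:ℝ)-1)^x)⁻¹
          = (((Nat.choose (d-1) (x+1) : ℕ):ℝ)*((n:ℝ)-1)^(x+1))⁻¹ := by
        refine eq_inv_of_mul_eq_one_left ?_
        field_simp
        push_cast at hchoose
        linear_combination ((n:ℝ)-1)^x * ((n:ℝ)-1) * hchoose
      push_cast at hfac
      calc ((x:ℝ)+1)/(((d - 1 - x : ℕ):ℝ)*((n:ℝ)-1)) *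
            (p 1 * (((Nat.choose (d-1) x : ℕ):ℝ)*((n:ℝ)-1)^x)⁻¹)
          = p 1 * (((x:ℝ)+1)/(((d - 1 - x : ℕ):ℝ)*((n:ℝ)-1)) *
            (((Nat.choose (d-1) x : ℕ):ℝ)*((n:ℝ)-1)^x)⁻¹) := by push_cast; ring
        _ = p 1 * (((Nat.choose (d-1) (x+1) : ℕ):ℝ)*((n:ℝ)-1)^(x+1))⁻¹ := by rw [hfac]
        _ = _ := by push_cast; ring
  -- telescoping sum
  have hsum : ∑ x ∈ Finset.range (r+1), (p (x+1) - p x) = 1 := by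
    rw [Finset.sum_range_sub]
    simp [hp0, hpr]
  rw [Finset.sum_congr rfl (fun x hx => key x (Nat.lt_succ_iff.mp (Finset.mem_range.mp hx)))]
    at hsum
  rw [← Finset.mul_sum] at hsum
  have hSpos : (0:ℝ) < ∑ i ∈ Finset.range (r + 1),
      ((Nat.choose (d - 1) i : ℝ) * ((n : ℝ) - 1) ^ i)⁻¹ := by
    apply Finset.sum_pos
    · intro i hi
      have hi' : i ≤ d - 1 := le_trans (Nat.lt_succ_iff.mp (Finset.mem_range.mp hi)) hrd
      have : (0:ℝ) < (Nat.choose (d-1) i : ℝ) := by exact_mod_cast Nat.choose_pos hi'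
      positivity
    · exact ⟨0, Finset.mem_range.mpr (Nat.succ_pos r)⟩
  exact eq_inv_of_mul_eq_one_left (by linarith [hsum] : _)
end
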